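/- For logarithmic loss, the benefit of additional side information Y given common side information W equals conditional mutual information: inf_{X̂₁(W)} E[ℓ_log(X, X̂₁(W))] - inf_{X̂₂(Y,W)} E[ℓ_log(X, X̂₂(Y,W))] = I(X; Y | W), where estimates take values in Γ_n. -/

import Mathlib

open scoped BigOperators

def IsDist {α : Type*} [Fintype α] (p : α → ℝ) : Prop :=
  (∀ a, 0 ≤ p a) ∧ ∑ a, p a = 1

noncomputable def logLoss {α : Type*} (Q : α → ℝ) (x : α) : EReal :=
  if Q x = 0 then ⊤ else ((-Real.log (Q x) : ℝ) : EReal)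

noncomputable def negEnt {α : Type*} [Fintype α] (p : α → ℝ) : ℝ :=
  ∑ a, p a * Real.log (p a)

noncomputable def ent {α : Type*} [Fintype α] (p : α → ℝ) : ℝ := -negEnt p

noncomputable def margX {α β : Type*} [Fintype β] (p : α × β → ℝ) (x : α) : ℝ := ∑ y, p (x, y)

noncomputable def margY {α β : Type*} [Fintype α] (p : α × β → ℝ) (y : β) : ℝ := ∑ x, p (x, y)

noncomputable def condX {α β : Type*} [Fintype α] (p : α × β → ℝ) (y : β) (x : α) : ℝ :=
  p (x, y) / margY p y

noncomputable def mutInfo {α β : Type*} [Fintype α] [Fintype β] (p : α × β → ℝ) : ℝ :=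
  ent (margX p) + ent (margY p) - ent p

/-- Probability that `f = u` under the mass function `p`. -/
noncomputable def pmf {Ω U : Type*} [Fintype Ω] [DecidableEq U]
    (p : Ω → ℝ) (f : Ω → U) (u : U) : ℝ :=
  ∑ ω ∈ Finset.univ.filter fun ω => f ω = u, p ω

/-- Conditional mutual information `I(f ; g | h)` (natural logarithm). -/
noncomputable def condMI {Ω U V W : Type*} [Fintype Ω] [Fintype U] [Fintype V] [Fintype W]
    [DecidableEq U] [DecidableEq V] [DecidableEq W]
    (p : Ω → ℝ) (f : Ω → U) (g : Ω → V) (h : Ω → W) : ℝ :=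
  ∑ u, ∑ v, ∑ w,
    pmf p (fun ω => (f ω, g ω, h ω)) (u, v, w) *
      Real.log ((pmf p (fun ω => (f ω, g ω, h ω)) (u, v, w) * pmf p h w) /
        (pmf p (fun ω => (f ω, h ω)) (u, w) * pmf p (fun ω => (g ω, h ω)) (v, w)))


/-! ### Auxiliary lemmas -/

private lemma ereal_coe_sum' {ι : Type*} (s : Finset ι) (f : ι → ℝ) :
    ((∑ i ∈ s, f i : ℝ) : EReal) = ∑ i ∈ s, ((f i : ℝ) : EReal) :=
  map_sum (⟨⟨Real.toEReal, EReal.coe_zero⟩, EReal.coe_add⟩ : ℝ →+ EReal) f s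

private lemma ereal_sum_mul' {ι : Type*} (f : ι → ℝ) (c : EReal) :
    ∀ s : Finset ι, (∀ i ∈ s, 0 ≤ f i) →
      ∑ i ∈ s, (f i : EReal) * c = ((∑ i ∈ s, f i : ℝ) : EReal) * c := by
  intro s
  classical
  induction s using Finset.induction_on with
  | empty => simp
  | insert _ _ ha ih =>
    intro hf
    rw [Finset.sum_insert ha, Finset.sum_insert ha,
      ih (fun i hi => hf i (Finset.mem_insert_of_mem hi)), EReal.coe_add,
      EReal.right_distrib_of_nonneg (EReal.coe_nonneg.2 (hf _ (Finset.mem_insert_self _ _)))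
        (EReal.coe_nonneg.2 (Finset.sum_nonneg fun i hi => hf i (Finset.mem_insert_of_mem hi)))]

private lemma inf_logLoss_eq' {A S : Type*} [Fintype A] [Fintype S]
    (p : A × S → ℝ) (h0 : ∀ z, 0 ≤ p z) (h1 : ∑ z, p z = 1) :
    (⨅ f : S → {q : A → ℝ // IsDist q},
        ∑ z : A × S, (p z : EReal) * logLoss (f z.2).1 z.1)
      = ((∑ z : A × S, p z * Real.log ((∑ a, p (a, z.2)) / p z) : ℝ) : EReal) := by
  classical
  have hAS : Nonempty (A × S) := by
    by_contra h
    have he : IsEmpty (A × S) := not_nonempty_iff.mp h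
    rw [Finset.sum_of_isEmpty] at h1
    exact one_ne_zero h1.symm
  have hA : Nonempty A := ⟨hAS.some.1⟩
  set m : S → ℝ := fun s => ∑ a, p (a, s) with hm
  have hm0 : ∀ s, 0 ≤ m s := fun s => Finset.sum_nonneg fun a _ => h0 _
  have hmz : ∀ z : A × S, p z ≤ m z.2 := by
    intro z
    refine Finset.single_le_sum (f := fun a => p (a, z.2)) (fun a _ => h0 _) (Finset.mem_univ z.1)
  have hcard : 0 < (Fintype.card A : ℝ) := by
    have := Fintype.card_pos (α := A)
    positivity
  have hq0 : IsDist (fun _ : A => (Fintype.card A : ℝ)⁻¹) := by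
    constructor
    · intro a; positivity
    · simp only [Finset.sum_const, nsmul_eq_mul, Finset.card_univ]
      exact mul_inv_cancel₀ hcard.ne'
  set F : S → {q : A → ℝ // IsDist q} := fun s =>
    if h : m s = 0 then ⟨fun _ => (Fintype.card A : ℝ)⁻¹, hq0⟩
    else ⟨fun a => p (a, s) / m s,
      ⟨fun a => div_nonneg (h0 _) (hm0 s), by rw [← Finset.sum_div, div_self h]⟩⟩ with hF
  apply le_antisymm
  · refine (iInf_le _ F).trans (le_of_eq ?_)
    rw [ereal_coe_sum']
    refine Finset.sum_congr rfl fun z _ => ?_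
    rcases eq_or_lt_of_le (h0 z) with hp | hp
    · rw [← hp]; simp
    · have hms : 0 < m z.2 := lt_of_lt_of_le hp (hmz z)
      have hFz : (F z.2).1 z.1 = p z / m z.2 := by
        rw [hF]; simp only [dif_neg hms.ne']
      simp only [logLoss, hFz]
      rw [if_neg (by positivity)]
      rw [← EReal.coe_mul]
      congr 1
      rw [← Real.log_inv, inv_div]
  · refine le_iInf fun f => ?_
    set q : A × S → ℝ := fun z => (f z.2).1 z.1 with hq
    have hq0' : ∀ z, 0 ≤ q z := fun z => (f z.2).2.1 z.1
    set bound : A × S → ℝ := fun z =>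
      p z * Real.log (m z.2 / p z) + p z * (1 - q z * (m z.2 / p z)) with hb
    have step1 : (∑ z : A × S, p z * Real.log (m z.2 / p z)) ≤ ∑ z, bound z := by
      rw [hb]
      rw [Finset.sum_add_distrib]
      have : 0 ≤ ∑ z : A × S, p z * (1 - q z * (m z.2 / p z)) := by
        have expand : ∀ z : A × S, p z * (1 - q z * (m z.2 / p z))
            = p z - p z * (q z * (m z.2 / p z)) := fun z => by ring
        simp only [expand]
        rw [Finset.sum_sub_distrib, h1, sub_nonneg]
        have hle : ∀ z : A × S, p z * (q z * (m z.2 / p z)) ≤ q z * m z.2 := by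
          intro z
          rcases eq_or_lt_of_le (h0 z) with hp | hp
          · rw [← hp]
            simpa using mul_nonneg (hq0' z) (hm0 z.2)
          · rw [show p z * (q z * (m z.2 / p z)) = q z * m z.2 * (p z / p z) by ring,
              div_self hp.ne', mul_one]
        refine (Finset.sum_le_sum fun z _ => hle z).trans ?_
        rw [Fintype.sum_prod_type_right]
        have : ∀ s : S, (∑ a : A, q (a, s) * m s) = m s := by
          intro s
          rw [← Finset.sum_mul]
          rw [show (∑ a : A, q (a, s)) = 1 from (f s).2.2, one_mul]
        simp only [this]
        rw [hm]
        rw [← Fintype.sum_prod_type_right (f := fun z : A × S => p z), h1]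
      linarith
    calc ((∑ z : A × S, p z * Real.log (m z.2 / p z) : ℝ) : EReal)
        ≤ ((∑ z : A × S, bound z : ℝ) : EReal) := EReal.coe_le_coe_iff.2 step1
      _ ≤ ∑ z : A × S, (p z : EReal) * logLoss (f z.2).1 z.1 := by
          rw [ereal_coe_sum']
          refine Finset.sum_le_sum fun z _ => ?_
          rcases eq_or_lt_of_le (h0 z) with hp | hp
          · have hz : p z = 0 := hp.symm
            simp [hb, hz]
          · rcases eq_or_lt_of_le (hq0' z) with hqz | hqz
            · have : logLoss (f z.2).1 z.1 = ⊤ := by rw [logLoss, if_pos hqz.symm]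
              rw [this, EReal.mul_top_of_pos (by exact_mod_cast hp)]
              exact le_top
            · have hms : 0 < m z.2 := lt_of_lt_of_le hp (hmz z)
              have : logLoss (f z.2).1 z.1 = ((-Real.log (q z) : ℝ) : EReal) := by
                rw [logLoss, if_neg hqz.ne']
              rw [this, ← EReal.coe_mul, EReal.coe_le_coe_iff]
              have key := Real.log_le_sub_one_of_pos
                (show 0 < q z * (m z.2 / p z) by positivity)
              rw [Real.log_mul hqz.ne' (by positivity)] at key
              have hlog : Real.log (m z.2 / p z) = Real.log (m z.2) - Real.log (p z) :=
                Real.log_div hms.ne' hp.ne'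
              rw [hb]
              nlinarith [mul_le_mul_of_nonneg_left key hp.le]

private lemma ite_swap0' (a b : Prop) [Decidable a] [Decidable b] (r : ℝ) :
    (if a then if b then r else 0 else 0) = (if b then if a then r else 0 else 0) := by
  split <;> split <;> simp_all

section pmfLemmas
variable {X Y W : Type*} [Fintype X] [Fintype Y] [Fintype W]
  [DecidableEq X] [DecidableEq Y] [DecidableEq W] (p : X × Y × W → ℝ)

private lemma pmf_triple' (u : X) (v : Y) (w : W) :
    pmf p (fun z => (z.1, z.2.1, z.2.2)) (u, v, w) = p (u, v, w) := by
  rw [pmf]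
  have h : (Finset.univ.filter fun z : X × Y × W => (z.1, z.2.1, z.2.2) = (u, v, w))
      = {(u, v, w)} := by
    ext z
    simp only [Finset.mem_filter, Finset.mem_univ, true_and, Finset.mem_singleton,
      Prod.ext_iff]
  rw [h, Finset.sum_singleton]

private lemma pmf_XW' (u : X) (w : W) :
    pmf p (fun z => (z.1, z.2.2)) (u, w) = ∑ v, p (u, v, w) := by
  rw [pmf]
  have h : (Finset.univ.filter fun z : X × Y × W => (z.1, z.2.2) = (u, w))
      = Finset.univ.image (fun v : Y => (u, v, w)) := by
    ext ⟨a, b, c⟩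
    simp only [Finset.mem_filter, Finset.mem_univ, true_and, Finset.mem_image, Prod.mk.injEq]
    constructor
    · rintro ⟨rfl, rfl⟩; exact ⟨b, rfl, rfl, rfl⟩
    · rintro ⟨v, rfl, rfl, rfl⟩; exact ⟨rfl, rfl⟩
  rw [h, Finset.sum_image (by intro a _ b _ h; simpa using h)]

private lemma pmf_YW' (v : Y) (w : W) :
    pmf p (fun z => (z.2.1, z.2.2)) (v, w) = ∑ u, p (u, v, w) := by
  rw [pmf]
  have h : (Finset.univ.filter fun z : X × Y × W => (z.2.1, z.2.2) = (v, w))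
      = Finset.univ.image (fun u : X => (u, v, w)) := by
    ext ⟨a, b, c⟩
    simp only [Finset.mem_filter, Finset.mem_univ, true_and, Finset.mem_image, Prod.mk.injEq]
    constructor
    · rintro ⟨rfl, rfl⟩; exact ⟨a, rfl, rfl, rfl⟩
    · rintro ⟨x, rfl, rfl, rfl⟩; exact ⟨rfl, rfl⟩
  rw [h, Finset.sum_image (by intro a _ b _ h; simpa using h)]

private lemma pmf_W' (w : W) :
    pmf p (fun z => z.2.2) w = ∑ u, ∑ v, p (u, v, w) := by
  rw [pmf]
  have h : (Finset.univ.filter fun z : X × Y × W => z.2.2 = w)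
      = Finset.univ.image (fun uv : X × Y => (uv.1, uv.2, w)) := by
    ext ⟨a, b, c⟩
    simp only [Finset.mem_filter, Finset.mem_univ, true_and, Finset.mem_image, Prod.mk.injEq]
    constructor
    · rintro rfl; exact ⟨(a, b), rfl, rfl, rfl⟩
    · rintro ⟨⟨x, y⟩, rfl, rfl, rfl⟩; rfl
  rw [h, Finset.sum_image (by rintro ⟨a, b⟩ _ ⟨c, d⟩ _ h; simpa [Prod.ext_iff] using h)]
  rw [Fintype.sum_prod_type]

end pmfLemmas

/-- For logarithmic loss, the benefit of additional side information `Y`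
given common side information `W` equals the conditional mutual information
`I(X; Y | W)`. -/
theorem log_loss_benefit_given_common_side_info {X Y W : Type*}
    [Fintype X] [Fintype Y] [Fintype W] [DecidableEq X] [DecidableEq Y] [DecidableEq W]
    (p : X × Y × W → ℝ) (hp : IsDist p) :
    (⨅ f : W → {q : X → ℝ // IsDist q},
        ∑ z : X × Y × W, (p z : EReal) * logLoss (f z.2.2).1 z.1)
      - (⨅ g : Y × W → {q : X → ℝ // IsDist q},
          ∑ z : X × Y × W, (p z : EReal) * logLoss (g z.2).1 z.1)
      = ((condMI p (fun z => z.1) (fun z => z.2.1) (fun z => z.2.2) : ℝ) : EReal) := by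
  obtain ⟨h0, h1⟩ := hp
  -- the second infimum, via the general lemma with side information `Y × W`
  have hg := inf_logLoss_eq' (A := X) (S := Y × W) p h0 h1
  -- the first infimum: marginalize over `Y`
  set p1 : X × W → ℝ := fun z => ∑ y, p (z.1, y, z.2) with hp1
  have h0' : ∀ z, 0 ≤ p1 z := fun z => Finset.sum_nonneg fun y _ => h0 _
  have h1' : ∑ z, p1 z = 1 := by
    rw [← h1]
    rw [Fintype.sum_prod_type (f := p1), Fintype.sum_prod_type (f := p)]
    refine Finset.sum_congr rfl fun x _ => ?_
    rw [Fintype.sum_prod_type]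
    rw [Finset.sum_comm]
  have hobj : ∀ f : W → {q : X → ℝ // IsDist q},
      (∑ z : X × Y × W, (p z : EReal) * logLoss (f z.2.2).1 z.1)
        = ∑ z : X × W, (p1 z : EReal) * logLoss (f z.2).1 z.1 := by
    intro f
    rw [show (∑ z : X × W, (p1 z : EReal) * logLoss (f z.2).1 z.1)
        = ∑ x, ∑ w, (p1 (x, w) : EReal) * logLoss (f w).1 x from Fintype.sum_prod_type _]
    rw [Fintype.sum_prod_type]
    refine Finset.sum_congr rfl fun x _ => ?_
    rw [Fintype.sum_prod_type, Finset.sum_comm]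
    refine Finset.sum_congr rfl fun w _ => ?_
    rw [ereal_sum_mul' (fun y => p (x, y, w)) (logLoss (f w).1 x) Finset.univ
      (fun y _ => h0 _)]
  have hf : (⨅ f : W → {q : X → ℝ // IsDist q},
        ∑ z : X × Y × W, (p z : EReal) * logLoss (f z.2.2).1 z.1)
      = ((∑ z : X × W, p1 z * Real.log ((∑ a, p1 (a, z.2)) / p1 z) : ℝ) : EReal) := by
    rw [iInf_congr hobj]
    exact inf_logLoss_eq' p1 h0' h1'
  rw [hf, hg, ← EReal.coe_sub]
  congr 1
  -- now a purely real identity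
  rw [condMI]
  simp only [pmf_triple', pmf_XW', pmf_YW', pmf_W', hp1]
  have hS1 : (∑ z : X × W, (∑ v, p (z.1, v, z.2)) *
        Real.log ((∑ u, ∑ v, p (u, v, z.2)) / (∑ v, p (z.1, v, z.2))))
      = ∑ u, ∑ v, ∑ w, p (u, v, w) *
          Real.log ((∑ u', ∑ v', p (u', v', w)) / (∑ v', p (u, v', w))) := by
    rw [Fintype.sum_prod_type]
    refine Finset.sum_congr rfl fun u _ => ?_
    rw [Finset.sum_comm]
    refine Finset.sum_congr rfl fun w _ => ?_
    rw [Finset.sum_mul]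
  have hS2 : (∑ z : X × Y × W, p z * Real.log ((∑ u, p (u, z.2.1, z.2.2)) / p z))
      = ∑ u, ∑ v, ∑ w, p (u, v, w) *
          Real.log ((∑ u', p (u', v, w)) / p (u, v, w)) := by
    rw [Fintype.sum_prod_type]
    refine Finset.sum_congr rfl fun u _ => ?_
    rw [Fintype.sum_prod_type]
  rw [hS1, hS2, ← Finset.sum_sub_distrib]
  refine Finset.sum_congr rfl fun u _ => ?_
  rw [← Finset.sum_sub_distrib]
  refine Finset.sum_congr rfl fun v _ => ?_
  rw [← Finset.sum_sub_distrib]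
  refine Finset.sum_congr rfl fun w _ => ?_
  rcases eq_or_lt_of_le (h0 (u, v, w)) with hpz | hpz
  · rw [← hpz]; ring
  · have hXW : 0 < ∑ v', p (u, v', w) :=
      lt_of_lt_of_le hpz (Finset.single_le_sum (f := fun v' => p (u, v', w))
        (fun i _ => h0 _) (Finset.mem_univ v))
    have hYW : 0 < ∑ u', p (u', v, w) :=
      lt_of_lt_of_le hpz (Finset.single_le_sum (f := fun u' => p (u', v, w))
        (fun i _ => h0 _) (Finset.mem_univ u))
    have hW : 0 < ∑ u', ∑ v', p (u', v', w) :=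
      lt_of_lt_of_le hXW (Finset.single_le_sum (f := fun u' => ∑ v', p (u', v', w))
        (fun i _ => Finset.sum_nonneg fun j _ => h0 _) (Finset.mem_univ u))
    rw [← mul_sub]
    congr 1
    rw [Real.log_div hW.ne' hXW.ne', Real.log_div hYW.ne' hpz.ne',
      Real.log_div (by positivity) (by positivity),
      Real.log_mul hpz.ne' hW.ne', Real.log_mul hXW.ne' hYW.ne']
    ring
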